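/- Let G be a graph, R a 2-cluster modulator of size r (so G − R is the disjoint union of two cliques on vertex sets S and S′). With F defined by taking min{r, |E|} vertices from each equivalence class E of the relation u ∼ v ⟺ N[u] = N[v] on S ∪ S′, there exist a set Q ⊆ F with |Q| ≤ 2r and a Grundy coloring (C′_1, …, C′_{γ′}) of G[Q ∪ R] such that some optimal Grundy coloring (C_1, …, C_γ) of G (one achieving the Grundy number) contains (C′_1, …, C′_{γ′}) as a subsequence. -/

import Mathlib

set_option linter.unusedSectionVars false
set_option maxHeartbeats 1000000

variable {V : Type*} [Fintype V] [DecidableEq V]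

/-- A Grundy coloring of the vertex set `X` of `G`: an ordered partition of `X`
into nonempty independent sets such that every vertex of the `i`-th class has a
neighbor in every earlier class. -/
def GrundyColoringOn (G : SimpleGraph V) (X : Finset V) (C : List (Finset V)) : Prop :=
  (∀ A ∈ C, A.Nonempty) ∧
  C.Pairwise Disjoint ∧
  (∀ v, v ∈ X ↔ ∃ A ∈ C, v ∈ A) ∧
  (∀ A ∈ C, ∀ u ∈ A, ∀ w ∈ A, ¬ G.Adj u w) ∧
  (∀ i j : ℕ, ∀ hi : i < C.length, ∀ hj : j < C.length, j < i →
     ∀ v ∈ C.get ⟨i, hi⟩, ∃ u ∈ C.get ⟨j, hj⟩, G.Adj u v)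

/-- The set of lengths of Grundy colorings of `X` in `G`; its greatest element
is the Grundy number of the induced subgraph `G[X]`. -/
def grundySet (G : SimpleGraph V) (X : Finset V) : Set ℕ :=
  {n | ∃ C : List (Finset V), GrundyColoringOn G X C ∧ C.length = n}

/-- Same closed neighborhood. -/
def NEq (G : SimpleGraph V) (u v : V) : Prop :=
  ∀ w, (w = u ∨ G.Adj w u) ↔ (w = v ∨ G.Adj w v)

lemma NEq.adj {G : SimpleGraph V} {u v : V} (h : NEq G u v) (hne : u ≠ v) : G.Adj u v := by
  rcases (h u).mp (Or.inl rfl) with h1 | h1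
  · exact absurd h1 hne
  · exact h1

lemma swap_adj_aux {G : SimpleGraph V} {u f : V} (h : NEq G u f) :
    ∀ x y : V, G.Adj x y → G.Adj (Equiv.swap u f x) (Equiv.swap u f y) := by
  have key : ∀ w, w ≠ u → w ≠ f → (G.Adj w u ↔ G.Adj w f) := by
    intro w hwu hwf
    constructor
    · intro ha
      rcases (h w).mp (Or.inr ha) with h1 | h1
      · exact absurd h1 hwf
      · exact h1
    · intro ha
      rcases (h w).mpr (Or.inr ha) with h1 | h1
      · exact absurd h1 hwu
      · exact h1
  rcases eq_or_ne u f with rfl | huf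
  · intro x y hxy; simpa using hxy
  intro x y hxy
  by_cases hxu : x = u
  · subst hxu
    by_cases hyf : y = f
    · subst hyf
      rw [Equiv.swap_apply_left, Equiv.swap_apply_right]
      exact hxy.symm
    · have hyu : y ≠ x := hxy.ne'
      rw [Equiv.swap_apply_left, Equiv.swap_apply_of_ne_of_ne hyu hyf]
      exact ((key y hyu hyf).mp hxy.symm).symm
  by_cases hxf : x = f
  · subst hxf
    by_cases hyu : y = u
    · subst hyu
      rw [Equiv.swap_apply_right, Equiv.swap_apply_left]
      exact hxy.symm
    · have hyf : y ≠ x := hxy.ne'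
      rw [Equiv.swap_apply_right, Equiv.swap_apply_of_ne_of_ne hyu hyf]
      exact ((key y hyu hyf).mpr hxy.symm).symm
  · rw [Equiv.swap_apply_of_ne_of_ne hxu hxf]
    by_cases hyu : y = u
    · subst hyu
      rw [Equiv.swap_apply_left]
      exact (key x hxu hxf).mp hxy
    by_cases hyf : y = f
    · subst hyf
      rw [Equiv.swap_apply_right]
      exact (key x hxu hxf).mpr hxy
    · rw [Equiv.swap_apply_of_ne_of_ne hyu hyf]
      exact hxy

lemma swap_adj {G : SimpleGraph V} {u f : V} (h : NEq G u f) (x y : V) :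
    G.Adj (Equiv.swap u f x) (Equiv.swap u f y) ↔ G.Adj x y := by
  constructor
  · intro ha
    have := swap_adj_aux h _ _ ha
    simpa [Equiv.swap_apply_self] using this
  · exact swap_adj_aux h x y

lemma same_class {C : List (Finset V)} (h2 : C.Pairwise Disjoint) {A B : Finset V}
    (hA : A ∈ C) (hB : B ∈ C) {w : V} (hwA : w ∈ A) (hwB : w ∈ B) : A = B := by
  by_contra hne
  haveI : Std.Symm (α := Finset V) Disjoint := ⟨fun _ _ h => h.symm⟩
  have hd : Disjoint A B := h2.forall hA hB hne
  exact (Finset.disjoint_left.mp hd hwA) hwB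

lemma map_grundy {G : SimpleGraph V} (σ : Equiv.Perm V)
    (hσ : ∀ x y, G.Adj (σ x) (σ y) ↔ G.Adj x y) {C : List (Finset V)}
    (h : GrundyColoringOn G Finset.univ C) :
    GrundyColoringOn G Finset.univ (C.map (Finset.image σ)) := by
  obtain ⟨h1, h2, h3, h4, h5⟩ := h
  refine ⟨?_, ?_, ?_, ?_, ?_⟩
  · intro A hA
    rcases List.mem_map.mp hA with ⟨B, hB, rfl⟩
    exact (h1 B hB).image _
  · refine List.Pairwise.map _ ?_ h2
    intro A B hAB
    exact (Finset.disjoint_image σ.injective).mpr hAB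
  · intro v
    simp only [Finset.mem_univ, true_iff]
    obtain ⟨A, hA, hvA⟩ := (h3 (σ.symm v)).mp (Finset.mem_univ _)
    exact ⟨A.image σ, List.mem_map_of_mem hA,
      Finset.mem_image.mpr ⟨_, hvA, σ.apply_symm_apply v⟩⟩
  · intro A hA u hu w hw
    rcases List.mem_map.mp hA with ⟨B, hB, rfl⟩
    rcases Finset.mem_image.mp hu with ⟨a, ha, rfl⟩
    rcases Finset.mem_image.mp hw with ⟨b, hb, rfl⟩
    rw [hσ]
    exact h4 B hB a ha b hb
  · intro i j hi hj hij v hv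
    have hi' : i < C.length := by simpa using hi
    have hj' : j < C.length := by simpa using hj
    simp only [List.get_eq_getElem, List.getElem_map] at hv ⊢
    rcases Finset.mem_image.mp hv with ⟨a, ha, rfl⟩
    obtain ⟨b, hb, hab⟩ := h5 i j hi' hj' hij a (by simpa using ha)
    exact ⟨σ b, Finset.mem_image_of_mem _ (by simpa using hb), (hσ b a).mpr hab⟩

open Classical in
/-- Vertices outside `R ∪ F` lying in a color class of `C` that meets `R`. -/
noncomputable def badIn (R F : Finset V) (C : List (Finset V)) : Finset V :=
  Finset.univ.filter (fun v => v ∉ R ∧ v ∉ F ∧ ∃ A ∈ C, v ∈ A ∧ (A ∩ R).Nonempty)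

lemma mem_badIn {R F : Finset V} {C : List (Finset V)} {v : V} :
    v ∈ badIn R F C ↔ v ∉ R ∧ v ∉ F ∧ ∃ A ∈ C, v ∈ A ∧ (A ∩ R).Nonempty := by
  classical
  simp [badIn]

theorem stmt12 (G : SimpleGraph V) [DecidableRel G.Adj] (R S S' : Finset V) (r : ℕ)
    (hr : R.card = r)
    (hdisj : Disjoint S S') (hcover : S ∪ S' = Finset.univ \ R)
    (hSne : S.Nonempty) (hS'ne : S'.Nonempty)
    (hS : G.IsClique ↑S) (hS' : G.IsClique ↑S')
    (hsep : ∀ u ∈ S, ∀ v ∈ S', ¬ G.Adj u v)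
    (F : Finset V) (hFS : F ⊆ S ∪ S')
    (hF : ∀ v ∈ S ∪ S',
      (F.filter (fun u => ∀ w, (w = u ∨ G.Adj w u) ↔ (w = v ∨ G.Adj w v))).card =
        min r (((S ∪ S').filter
          (fun u => ∀ w, (w = u ∨ G.Adj w u) ↔ (w = v ∨ G.Adj w v))).card))
    (γ : ℕ) (hγ : IsGreatest (grundySet G Finset.univ) γ) :
    ∃ Q ⊆ F, Q.card ≤ 2 * r ∧
      ∃ C' : List (Finset V), GrundyColoringOn G (Q ∪ R) C' ∧
        ∃ C : List (Finset V), GrundyColoringOn G Finset.univ C ∧ C.length = γ ∧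
          C'.Sublist C := by
  classical
  obtain ⟨C₀, hC₀, hlen₀⟩ := hγ.1
  -- Key counting step: every "bad" vertex has an equivalent partner in `F`
  -- lying in no class that meets `R`.
  have key_count : ∀ (C : List (Finset V)), GrundyColoringOn G Finset.univ C →
      ∀ u ∈ badIn R F C, ∃ f ∈ F, NEq G u f ∧ ∀ A ∈ C, f ∈ A → ¬ (A ∩ R).Nonempty := by
    intro C hC u hu
    obtain ⟨h1, h2, h3, h4, h5⟩ := hC
    obtain ⟨huR, huF, A₀, hA₀, huA₀, hA₀R⟩ := mem_badIn.mp hu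
    have huSS : u ∈ S ∪ S' := by
      rw [hcover, Finset.mem_sdiff]
      exact ⟨Finset.mem_univ _, huR⟩
    by_contra hcon
    push_neg at hcon
    have hFE := hF u huSS
    set FE : Finset V := F.filter
        (fun w => ∀ x, (x = w ∨ G.Adj x w) ↔ (x = u ∨ G.Adj x u)) with hFEdef
    set Ecl : Finset V := (S ∪ S').filter
        (fun w => ∀ x, (x = w ∨ G.Adj x w) ↔ (x = u ∨ G.Adj x u)) with hEcldef
    set AE : Finset V := Ecl.filter (fun v => ∃ A ∈ C, v ∈ A ∧ (A ∩ R).Nonempty) with hAEdef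
    have hFE_sub : FE ⊆ AE := by
      intro f hf
      rw [hFEdef, Finset.mem_filter] at hf
      obtain ⟨hfF, hfP⟩ := hf
      obtain ⟨A, hAC, hfA, hAR⟩ := hcon f hfF (fun w => (hfP w).symm)
      rw [hAEdef, Finset.mem_filter]
      refine ⟨?_, A, hAC, hfA, hAR⟩
      rw [hEcldef, Finset.mem_filter]
      exact ⟨hFS hfF, hfP⟩
    have huAE : u ∈ AE := by
      rw [hAEdef, Finset.mem_filter]
      refine ⟨?_, A₀, hA₀, huA₀, hA₀R⟩
      rw [hEcldef, Finset.mem_filter]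
      exact ⟨huSS, fun x => Iff.rfl⟩
    have huFE : u ∉ FE := by
      rw [hFEdef, Finset.mem_filter]
      exact fun h => huF h.1
    have hins : insert u FE ⊆ AE := by
      intro x hx
      rcases Finset.mem_insert.mp hx with rfl | hx
      · exact huAE
      · exact hFE_sub hx
    have hcard1 : FE.card + 1 ≤ AE.card := by
      have h := Finset.card_le_card hins
      rwa [Finset.card_insert_of_notMem huFE] at h
    have hAE_r : AE.card ≤ r := by
      rw [← hr]
      set ρ : V → V := fun v =>
        if h : ∃ w, w ∈ R ∧ ∃ A ∈ C, v ∈ A ∧ w ∈ A then h.choose else v with hρdef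
      have hρ : ∀ v ∈ AE, ρ v ∈ R ∧ ∃ A ∈ C, v ∈ A ∧ ρ v ∈ A := by
        intro v hv
        rw [hAEdef, Finset.mem_filter] at hv
        obtain ⟨-, A, hAC, hvA, w, hw⟩ := hv
        rw [Finset.mem_inter] at hw
        have hex : ∃ w, w ∈ R ∧ ∃ A ∈ C, v ∈ A ∧ w ∈ A := ⟨w, hw.2, A, hAC, hvA, hw.1⟩
        rw [hρdef]
        simp only [dif_pos hex]
        exact hex.choose_spec
      apply Finset.card_le_card_of_injOn ρ (fun v hv => (hρ v hv).1)
      intro v hv v' hv' heq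
      obtain ⟨hw1, A, hAC, hvA, hwA⟩ := hρ v hv
      obtain ⟨hw2, A', hA'C, hv'A, hwA'⟩ := hρ v' hv'
      rw [heq] at hwA
      have hAA' : A = A' := same_class h2 hAC hA'C hwA hwA'
      subst hAA'
      by_contra hne
      have hvE := Finset.mem_coe.mp hv
      have hv'E := Finset.mem_coe.mp hv'
      rw [hAEdef, Finset.mem_filter, hEcldef, Finset.mem_filter] at hvE hv'E
      have hNE : NEq G v v' := fun x => (hvE.1.2 x).trans (hv'E.1.2 x).symm
      exact h4 A hAC v hvA v' hv'A (hNE.adj hne)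
    have hAE_E : AE.card ≤ Ecl.card :=
      Finset.card_le_card (by rw [hAEdef]; exact Finset.filter_subset _ _)
    rw [hFE] at hcard1
    omega
  -- Main induction: remove bad vertices one by one using swaps.
  have main : ∀ (n : ℕ) (C : List (Finset V)), GrundyColoringOn G Finset.univ C →
      C.length = γ → (badIn R F C).card ≤ n →
      ∃ C₂, GrundyColoringOn G Finset.univ C₂ ∧ C₂.length = γ ∧ badIn R F C₂ = ∅ := by
    intro n
    induction n with
    | zero =>
      intro C hC hlen hcard
      exact ⟨C, hC, hlen, Finset.card_eq_zero.mp (Nat.le_zero.mp hcard)⟩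
    | succ n ih =>
      intro C hC hlen hcard
      rcases Finset.eq_empty_or_nonempty (badIn R F C) with he | ⟨u, hu⟩
      · exact ⟨C, hC, hlen, he⟩
      obtain ⟨f, hfF, hNE, hfgood⟩ := key_count C hC u hu
      obtain ⟨huR, huF, -⟩ := mem_badIn.mp hu
      have hfR : f ∉ R := by
        have hfSS : f ∈ S ∪ S' := hFS hfF
        rw [hcover, Finset.mem_sdiff] at hfSS
        exact hfSS.2
      set σ : Equiv.Perm V := Equiv.swap u f with hσdef
      have hσadj : ∀ x y, G.Adj (σ x) (σ y) ↔ G.Adj x y := swap_adj hNE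
      have hC₂ := map_grundy σ hσadj hC
      have hfix : ∀ A : Finset V, (A.image σ) ∩ R = A ∩ R := by
        intro A
        ext x
        simp only [Finset.mem_inter, Finset.mem_image]
        constructor
        · rintro ⟨⟨a, ha, rfl⟩, hxR⟩
          refine ⟨?_, hxR⟩
          have hh1 : σ a ≠ u := fun h => huR (h ▸ hxR)
          have hh2 : σ a ≠ f := fun h => hfR (h ▸ hxR)
          have hh3 : σ (σ a) = σ a := by
            rw [hσdef]
            exact Equiv.swap_apply_of_ne_of_ne hh1 hh2
          have hh4 : σ (σ a) = a := by
            rw [hσdef]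
            exact Equiv.swap_apply_self _ _ _
          have : a = σ a := hh4.symm.trans hh3
          exact this ▸ ha
        · rintro ⟨hxA, hxR⟩
          refine ⟨⟨x, hxA, ?_⟩, hxR⟩
          rw [hσdef]
          exact Equiv.swap_apply_of_ne_of_ne (fun h => huR (h ▸ hxR)) (fun h => hfR (h ▸ hxR))
      have hsubbad : badIn R F (C.map (Finset.image σ)) ⊆ (badIn R F C).erase u := by
        intro v hv
        obtain ⟨hvR, hvF, B, hBC, hvB, hBR⟩ := mem_badIn.mp hv
        rcases List.mem_map.mp hBC with ⟨A, hAC, rfl⟩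
        have hAR : (A ∩ R).Nonempty := by rwa [hfix A] at hBR
        rcases Finset.mem_image.mp hvB with ⟨a, haA, hav⟩
        have hva : σ v = a := by
          rw [← hav, hσdef, Equiv.swap_apply_self]
        by_cases hvu : v = u
        · exfalso
          have haf : a = f := by rw [← hva, hvu, hσdef, Equiv.swap_apply_left]
          exact hfgood A hAC (haf ▸ haA) hAR
        by_cases hvf : v = f
        · exact absurd (by rw [hvf]; exact hfF) hvF
        · have hvv : a = v := by
            rw [← hva, hσdef, Equiv.swap_apply_of_ne_of_ne hvu hvf]
          exact Finset.mem_erase.mpr ⟨hvu, mem_badIn.mpr ⟨hvR, hvF, A, hAC, hvv ▸ haA, hAR⟩⟩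
      have hclt : (badIn R F (C.map (Finset.image σ))).card ≤ n := by
        have hc1 := Finset.card_le_card hsubbad
        have hc2 := Finset.card_erase_of_mem hu
        have hc3 : 1 ≤ (badIn R F C).card := Finset.card_pos.mpr ⟨u, hu⟩
        omega
      exact ih (C.map (Finset.image σ)) hC₂ (by rw [List.length_map]; exact hlen) hclt
  obtain ⟨C, hC, hlen, hbad⟩ := main (badIn R F C₀).card C₀ hC₀ hlen₀ le_rfl
  obtain ⟨h1, h2, h3, h4, h5⟩ := hC
  set Q : Finset V := Finset.univ.filter
      (fun v => v ∉ R ∧ ∃ A ∈ C, v ∈ A ∧ (A ∩ R).Nonempty) with hQdef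
  have memQ : ∀ v, v ∈ Q ↔ v ∉ R ∧ ∃ A ∈ C, v ∈ A ∧ (A ∩ R).Nonempty := by
    intro v
    rw [hQdef]
    simp [Finset.mem_filter]
  have hQF : Q ⊆ F := by
    intro v hv
    obtain ⟨hvR, hA⟩ := (memQ v).mp hv
    by_contra hvF
    have hvb : v ∈ badIn R F C := mem_badIn.mpr ⟨hvR, hvF, hA⟩
    rw [hbad] at hvb
    exact absurd hvb (Finset.notMem_empty v)
  have hQcard : Q.card ≤ 2 * r := by
    set ρ : V → V := fun v =>
      if h : ∃ w, w ∈ R ∧ ∃ A ∈ C, v ∈ A ∧ w ∈ A then h.choose else v with hρdef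
    have hρ : ∀ v ∈ Q, ρ v ∈ R ∧ ∃ A ∈ C, v ∈ A ∧ ρ v ∈ A := by
      intro v hv
      obtain ⟨hvR, A, hAC, hvA, w, hw⟩ := (memQ v).mp hv
      rw [Finset.mem_inter] at hw
      have hex : ∃ w, w ∈ R ∧ ∃ A ∈ C, v ∈ A ∧ w ∈ A := ⟨w, hw.2, A, hAC, hvA, hw.1⟩
      rw [hρdef]
      simp only [dif_pos hex]
      exact hex.choose_spec
    have hle : Q.card ≤ (R ×ˢ (Finset.univ : Finset Bool)).card := by
      apply Finset.card_le_card_of_injOn (fun v => (ρ v, decide (v ∈ S)))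
        (fun v hv => Finset.mem_product.mpr ⟨(hρ v hv).1, Finset.mem_univ _⟩)
      intro v hv v' hv' heq
      simp only [Prod.mk.injEq] at heq
      obtain ⟨heq1, heq2⟩ := heq
      obtain ⟨hw1, A, hAC, hvA, hwA⟩ := hρ v hv
      obtain ⟨hw2, A', hA'C, hv'A, hwA'⟩ := hρ v' hv'
      rw [heq1] at hwA
      have hAA' : A = A' := same_class h2 hAC hA'C hwA hwA'
      subst hAA'
      have hSiff : v ∈ S ↔ v' ∈ S := decide_eq_decide.mp heq2
      have hvSS : v ∈ S ∪ S' := by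
        rw [hcover, Finset.mem_sdiff]
        exact ⟨Finset.mem_univ _, ((memQ v).mp hv).1⟩
      have hv'SS : v' ∈ S ∪ S' := by
        rw [hcover, Finset.mem_sdiff]
        exact ⟨Finset.mem_univ _, ((memQ v').mp hv').1⟩
      by_contra hne
      by_cases hvS : v ∈ S
      · have hv'S : v' ∈ S := hSiff.mp hvS
        exact h4 A hAC v hvA v' hv'A (hS (Finset.mem_coe.mpr hvS) (Finset.mem_coe.mpr hv'S) hne)
      · have hvS' : v ∈ S' := (Finset.mem_union.mp hvSS).resolve_left hvS
        have hv'S' : v' ∈ S' :=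
          (Finset.mem_union.mp hv'SS).resolve_left (fun h => hvS (hSiff.mpr h))
        exact h4 A hAC v hvA v' hv'A (hS' (Finset.mem_coe.mpr hvS') (Finset.mem_coe.mpr hv'S') hne)
    rw [Finset.card_product, hr, Finset.card_univ, Fintype.card_bool] at hle
    omega
  set C' : List (Finset V) := C.filter (fun A => decide (A ∩ R).Nonempty) with hC'def
  have hsub : C'.Sublist C := by rw [hC'def]; exact List.filter_sublist
  have memC' : ∀ A, A ∈ C' ↔ A ∈ C ∧ (A ∩ R).Nonempty := by
    intro A
    rw [hC'def]
    simp [List.mem_filter]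
  refine ⟨Q, hQF, hQcard, C', ?_, C, ⟨h1, h2, h3, h4, h5⟩, hlen, hsub⟩
  obtain ⟨emb, hemb⟩ := List.sublist_iff_exists_fin_orderEmbedding_get_eq.mp hsub
  refine ⟨?_, ?_, ?_, ?_, ?_⟩
  · intro A hA
    exact h1 A ((memC' A).mp hA).1
  · exact h2.sublist hsub
  · intro v
    constructor
    · intro hv
      rcases Finset.mem_union.mp hv with hvQ | hvR
      · obtain ⟨-, A, hAC, hvA, hAR⟩ := (memQ v).mp hvQ
        exact ⟨A, (memC' A).mpr ⟨hAC, hAR⟩, hvA⟩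
      · obtain ⟨A, hAC, hvA⟩ := (h3 v).mp (Finset.mem_univ v)
        exact ⟨A, (memC' A).mpr ⟨hAC, ⟨v, Finset.mem_inter.mpr ⟨hvA, hvR⟩⟩⟩, hvA⟩
    · rintro ⟨A, hAC', hvA⟩
      obtain ⟨hAC, hAR⟩ := (memC' A).mp hAC'
      by_cases hvR : v ∈ R
      · exact Finset.mem_union_right _ hvR
      · exact Finset.mem_union_left _ ((memQ v).mpr ⟨hvR, A, hAC, hvA, hAR⟩)
  · intro A hA
    exact h4 A ((memC' A).mp hA).1
  · intro i j hi hj hij v hv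
    have hlt : emb ⟨j, hj⟩ < emb ⟨i, hi⟩ := emb.strictMono (Fin.mk_lt_mk.mpr hij)
    rw [hemb ⟨i, hi⟩] at hv
    obtain ⟨w, hw, hadj⟩ := h5 (emb ⟨i, hi⟩).1 (emb ⟨j, hj⟩).1
      (emb ⟨i, hi⟩).2 (emb ⟨j, hj⟩).2 hlt v hv
    refine ⟨w, ?_, hadj⟩
    rw [hemb ⟨j, hj⟩]
    exact hw
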